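/- For the surrogate loss g(y) = ⟨∇f(x₀), y⟩ − 1{⟨∇f(x₀), v⟩ < 0}·⟨∇f(x₀), v⟩·S_X(y), every subgradient u of g at y₀ satisfies ‖u‖ ≤ ‖∇f(x₀)‖. -/

import Mathlib

local notation "⟪" x ", " y "⟫" => @inner ℝ _ _ x y

/-- Every subgradient u of the surrogate loss
g(y) = ⟨∇f(x₀), y⟩ − 1{⟨∇f(x₀),v⟩<0}·⟨∇f(x₀),v⟩·S_X(y) at y₀
satisfies ‖u‖ ≤ ‖∇f(x₀)‖. Here `gf` plays the role of ∇f(x₀). -/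
theorem surrogate_subgradient_norm_le {d : ℕ} (X Y : Set (EuclideanSpace ℝ (Fin d)))
    (hXc : IsClosed X) (hX : Convex ℝ X) (hXne : X.Nonempty)
    (hYc : IsClosed Y) (hY : Convex ℝ Y) (hXY : X ⊆ Y)
    (y₀ : EuclideanSpace ℝ (Fin d)) (hy₀ : y₀ ∈ Y)
    (x₀ : EuclideanSpace ℝ (Fin d)) (hx₀ : x₀ ∈ X)
    (hne : y₀ ≠ x₀)
    (hproj : ∀ z ∈ X, dist y₀ x₀ ≤ dist y₀ z)
    (gf u : EuclideanSpace ℝ (Fin d))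
    (g : EuclideanSpace ℝ (Fin d) → ℝ)
    (hg : ∀ y, g y =
      ⟪gf, y⟫ -
        (if ⟪gf, ‖y₀ - x₀‖⁻¹ • (y₀ - x₀)⟫ < 0
          then ⟪gf, ‖y₀ - x₀‖⁻¹ • (y₀ - x₀)⟫ else 0) * Metric.infDist y X)
    (hsub : ∀ y, g y₀ + ⟪u, y - y₀⟫ ≤ g y) :
    ‖u‖ ≤ ‖gf‖ := by
  set r : ℝ := ‖y₀ - x₀‖ with hr_def
  have hr : 0 < r := norm_pos_iff.mpr (sub_ne_zero.mpr hne)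
  set v : EuclideanSpace ℝ (Fin d) := r⁻¹ • (y₀ - x₀) with hv_def
  have hvnorm : ‖v‖ = 1 := by
    rw [hv_def, norm_smul, norm_inv, Real.norm_eq_abs, abs_of_pos hr]
    field_simp
    exact hr_def.symm
  have hrv : r • v = y₀ - x₀ := by
    rw [hv_def, smul_smul, mul_inv_cancel₀ hr.ne', one_smul]
  set c : ℝ := if ⟪gf, v⟫ < 0 then ⟪gf, v⟫ else 0 with hc_def
  have hc0 : c ≤ 0 := by
    rw [hc_def]; split <;> [exact le_of_lt ‹_›; rfl]
  set S : EuclideanSpace ℝ (Fin d) → ℝ := fun y => Metric.infDist y X with hS_def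
  -- separation: ⟪y₀ - x₀, z - x₀⟫ ≤ 0 for z ∈ X
  have hsep : ∀ z ∈ X, ⟪y₀ - x₀, z - x₀⟫ ≤ 0 := by
    haveI : Nonempty X := ⟨⟨x₀, hx₀⟩⟩
    have hbdd : BddBelow (Set.range fun w : X => ‖y₀ - (w : EuclideanSpace ℝ (Fin d))‖) := by
      refine ⟨0, ?_⟩
      rintro x ⟨w, rfl⟩
      exact norm_nonneg _
    have hinf : ‖y₀ - x₀‖ = ⨅ w : X, ‖y₀ - (w : EuclideanSpace ℝ (Fin d))‖ := by
      refine le_antisymm ?_ ?_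
      · exact le_ciInf fun w => by simpa [dist_eq_norm] using hproj w w.2
      · exact ciInf_le hbdd ⟨x₀, hx₀⟩
    exact (norm_eq_iInf_iff_real_inner_le_zero hX hx₀).mp hinf
  -- lower bound for infDist via the separating hyperplane
  have hlow : ∀ y : EuclideanSpace ℝ (Fin d), ⟪v, y - x₀⟫ ≤ S y := by
    intro y
    by_contra h
    push_neg at h
    obtain ⟨z, hz, hdz⟩ := (Metric.infDist_lt_iff hXne).mp h
    have h1 : ⟪v, y - z⟫ ≤ dist y z := by
      calc ⟪v, y - z⟫ ≤ ‖v‖ * ‖y - z‖ := real_inner_le_norm _ _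
        _ = dist y z := by rw [hvnorm, one_mul, dist_eq_norm]
    have h2 : ⟪v, z - x₀⟫ ≤ 0 := by
      have := hsep z hz
      rw [hv_def, real_inner_smul_left]
      exact mul_nonpos_of_nonneg_of_nonpos (inv_nonneg.mpr hr.le) this
    have : ⟪v, y - x₀⟫ ≤ dist y z := by
      have : ⟪v, y - x₀⟫ = ⟪v, y - z⟫ + ⟪v, z - x₀⟫ := by
        rw [← inner_add_right]; congr 1; abel
      linarith
    linarith
  have hSy₀ : S y₀ = r := by
    refine le_antisymm ?_ ?_
    · have := Metric.infDist_le_dist_of_mem (x := y₀) hx₀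
      simpa [hS_def, dist_eq_norm, hr_def] using this
    · have h := hlow y₀
      rw [← hrv, real_inner_smul_right, real_inner_self_eq_norm_sq, hvnorm] at h
      calc r = r * 1 ^ 2 := by ring
        _ ≤ S y₀ := h
  -- key subgradient inequality
  set a : EuclideanSpace ℝ (Fin d) := u - gf with ha_def
  have key : ∀ y, ⟪a, y - y₀⟫ ≤ -c * (S y - S y₀) := by
    intro y
    have h := hsub y
    rw [hg y, hg y₀] at h
    have hy : ⟪gf, y⟫ - ⟪gf, y₀⟫ = ⟪gf, y - y₀⟫ := by
      rw [inner_sub_right]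
    have ha : ⟪a, y - y₀⟫ = ⟪u, y - y₀⟫ - ⟪gf, y - y₀⟫ := by
      rw [ha_def, inner_sub_left]
    rw [ha, ← hy]
    simp only [hS_def]
    linarith
  -- norm bound on a
  have hnormA : ‖a‖ ≤ -c := by
    have h := key (y₀ + a)
    have hlip : S (y₀ + a) - S y₀ ≤ ‖a‖ := by
      have h' := Metric.infDist_le_infDist_add_dist (x := y₀ + a) (y := y₀) (s := X)
      have hd : dist (y₀ + a) y₀ = ‖a‖ := by simp [dist_eq_norm]
      rw [hd] at h'
      show Metric.infDist (y₀ + a) X - Metric.infDist y₀ X ≤ ‖a‖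
      linarith
    rw [show y₀ + a - y₀ = a by abel, real_inner_self_eq_norm_sq] at h
    have h3 : ‖a‖ ^ 2 ≤ -c * ‖a‖ := by
      calc ‖a‖ ^ 2 ≤ -c * (S (y₀ + a) - S y₀) := h
        _ ≤ -c * ‖a‖ := by
            apply mul_le_mul_of_nonneg_left hlip (by linarith)
    rcases eq_or_lt_of_le (norm_nonneg a) with h4 | h4
    · rw [← h4]; linarith
    · nlinarith
  -- inner product with v
  have hray : ∀ s : ℝ, 0 ≤ s → S (x₀ + s • v) = s := by
    intro s hs
    refine le_antisymm ?_ ?_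
    · have := Metric.infDist_le_dist_of_mem (x := x₀ + s • v) hx₀
      have hd : dist (x₀ + s • v) x₀ = s := by
        simp [dist_eq_norm, norm_smul, hvnorm, abs_of_nonneg hs]
      rw [hS_def]; rw [hd] at this; exact this
    · have := hlow (x₀ + s • v)
      have he : ⟪v, x₀ + s • v - x₀⟫ = s := by
        rw [show x₀ + s • v - x₀ = s • v by abel, real_inner_smul_right,
          real_inner_self_eq_norm_sq, hvnorm]
        ring
      rwa [he] at this
  have hav : ⟪a, v⟫ = -c := by
    have h1 := key (x₀ + (2 * r) • v)
    have h2 := key (x₀ + (0 : ℝ) • v)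
    have hy₀eq : y₀ = x₀ + r • v := by rw [hrv]; abel
    have hdiff : ∀ s : ℝ, x₀ + s • v - y₀ = (s - r) • v := by
      intro s; rw [hy₀eq]; rw [sub_smul]; abel
    rw [hdiff, hray _ (by positivity), hSy₀, real_inner_smul_right] at h1
    rw [hdiff, hray _ le_rfl, hSy₀, real_inner_smul_right] at h2
    have e1 : (2 * r - r) = r := by ring
    nlinarith [hr]
  -- conclude
  have hu : u = gf + a := by rw [ha_def]; abel
  by_cases hif : ⟪gf, v⟫ < 0
  · have hcval : c = ⟪gf, v⟫ := by rw [hc_def, if_pos hif]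
    have hcneg : c < 0 := hcval ▸ hif
    have hcs : ⟪a, v⟫ = ‖a‖ * ‖v‖ := by
      have h1 : -c ≤ ‖a‖ := by
        calc -c = ⟪a, v⟫ := hav.symm
          _ ≤ ‖a‖ * ‖v‖ := real_inner_le_norm _ _
          _ = ‖a‖ := by rw [hvnorm, mul_one]
      have : ‖a‖ = -c := le_antisymm hnormA h1
      rw [hav, hvnorm, this, mul_one]
    have haeq : a = (-c) • v := by
      have := inner_eq_norm_mul_iff_real.mp hcs
      rw [hvnorm, one_smul] at this
      rw [this]
      congr 1
      exact le_antisymm hnormA (by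
        calc -c = ⟪a, v⟫ := hav.symm
          _ ≤ ‖a‖ * ‖v‖ := real_inner_le_norm _ _
          _ = ‖a‖ := by rw [hvnorm, mul_one])
    have hsq : ‖u‖ ^ 2 = ‖gf‖ ^ 2 - c ^ 2 := by
      rw [hu, haeq, norm_add_sq_real, real_inner_smul_right, norm_smul, hvnorm,
        mul_one, Real.norm_eq_abs, abs_of_pos (by linarith : (0:ℝ) < -c)]
      rw [hcval]; ring
    have hle : ‖u‖ ^ 2 ≤ ‖gf‖ ^ 2 := by rw [hsq]; nlinarith
    exact (pow_le_pow_iff_left₀ (norm_nonneg u) (norm_nonneg gf) two_ne_zero).mp hle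
  · have hcval : c = 0 := by rw [hc_def, if_neg hif]
    have : ‖a‖ ≤ 0 := by rw [hcval] at hnormA; simpa using hnormA
    have ha0 : a = 0 := norm_le_zero_iff.mp this
    rw [hu, ha0, add_zero]
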